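/- arXiv:2003.08417 — 3 statements merged into one kernel-verified Lean document; each statement's English description precedes it below -/
import Mathlib

section
/- Let n ≥ 1 be a natural number and let ε ∈ [0,1] be real. Then for all real numbers F ≥ 0 and G ≥ 0 with G ≥ e^{-ε}·F, one has ((1-ε)·G^{1/n} + ε·(2^n·F)^{1/n})^n ≥ (1 + ε²/n)·F. -/
/-- For `n ≥ 1`, `ε ∈ [0,1]`, and reals `F, G ≥ 0` with `G ≥ e^{-ε}·F`,
one has `((1-ε)·G^{1/n} + ε·(2^n·F)^{1/n})^n ≥ (1 + ε²/n)·F`. -/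
theorem stmt_0 (n : ℕ) (hn : 1 ≤ n) (ε : ℝ) (hε0 : 0 ≤ ε) (hε1 : ε ≤ 1)
    (F G : ℝ) (hF : 0 ≤ F) (hG : 0 ≤ G) (hGF : Real.exp (-ε) * F ≤ G) :
    (1 + ε ^ 2 / (n : ℝ)) * F ≤
      ((1 - ε) * G ^ ((1 : ℝ) / n) + ε * ((2 ^ n * F) ^ ((1 : ℝ) / n))) ^ n := by
  have hn0 : (0 : ℝ) < (n : ℝ) := by exact_mod_cast hn
  have hn0' : ((n : ℝ) ≠ 0) := ne_of_gt hn0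
  have htnn : 0 ≤ ε ^ 2 / (n : ℝ) := div_nonneg (sq_nonneg ε) hn0.le
  have hc1 : (1 : ℝ) ≤ 1 + ε ^ 2 / (n : ℝ) := le_add_of_nonneg_right htnn
  -- (2^n * F)^(1/n) = 2 * F^(1/n)
  have h2 : ((2 : ℝ) ^ n * F) ^ ((1 : ℝ) / n) = 2 * F ^ ((1 : ℝ) / n) := by
    rw [Real.mul_rpow (by positivity) hF, ← Real.rpow_natCast (2 : ℝ) n,
      ← Real.rpow_mul (by norm_num), mul_one_div, div_self hn0', Real.rpow_one]
  -- G^(1/n) ≥ exp(-(ε/n)) * F^(1/n)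
  have hGr : Real.exp (-(ε / n)) * F ^ ((1 : ℝ) / n) ≤ G ^ ((1 : ℝ) / n) := by
    have h1 : (Real.exp (-ε) * F) ^ ((1 : ℝ) / n) ≤ G ^ ((1 : ℝ) / n) :=
      Real.rpow_le_rpow (by positivity) hGF (by positivity)
    have h2' : (Real.exp (-ε)) ^ ((1 : ℝ) / n) = Real.exp (-(ε / n)) := by
      rw [← Real.exp_one_rpow (-ε), ← Real.rpow_mul (Real.exp_pos 1).le,
        Real.exp_one_rpow]
      congr 1
      field_simp
    calc Real.exp (-(ε / n)) * F ^ ((1 : ℝ) / n)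
        = (Real.exp (-ε) * F) ^ ((1 : ℝ) / n) := by
          rw [Real.mul_rpow (Real.exp_pos _).le hF, h2']
      _ ≤ _ := h1
  have hexp : 1 - ε / n ≤ Real.exp (-(ε / n)) := by
    have := Real.add_one_le_exp (-(ε / n))
    linarith
  have hFr : 0 ≤ F ^ ((1 : ℝ) / n) := Real.rpow_nonneg hF _
  have h1e : 0 ≤ 1 - ε := by linarith
  -- inner bound
  have hinner : (1 + ε ^ 2 / (n : ℝ)) * F ^ ((1 : ℝ) / n) ≤
      (1 - ε) * G ^ ((1 : ℝ) / n) + ε * ((2 ^ n * F) ^ ((1 : ℝ) / n)) := by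
    rw [h2]
    have step : ((1 - ε) * Real.exp (-(ε / n)) + 2 * ε) * F ^ ((1 : ℝ) / n) ≤
        (1 - ε) * G ^ ((1 : ℝ) / n) + ε * (2 * F ^ ((1 : ℝ) / n)) := by
      have h := mul_le_mul_of_nonneg_left hGr h1e
      nlinarith [h]
    refine le_trans ?_ step
    apply mul_le_mul_of_nonneg_right _ hFr
    have hεn : ε / n ≤ ε := div_le_self hε0 (by exact_mod_cast hn)
    have hts : ε * (ε / (n : ℝ)) = ε ^ 2 / (n : ℝ) := by ring
    have key : 1 + ε ^ 2 / (n : ℝ) ≤ (1 - ε) * (1 - ε / n) + 2 * ε := by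
      nlinarith [hts, hεn]
    have h3 := mul_le_mul_of_nonneg_left hexp h1e
    nlinarith [key, h3]
  -- now raise to power n
  have hcF : 0 ≤ (1 + ε ^ 2 / (n : ℝ)) * F ^ ((1 : ℝ) / n) := mul_nonneg (by linarith) hFr
  have hpow : ((1 + ε ^ 2 / (n : ℝ)) * F ^ ((1 : ℝ) / n)) ^ n ≤
      ((1 - ε) * G ^ ((1 : ℝ) / n) + ε * ((2 ^ n * F) ^ ((1 : ℝ) / n))) ^ n :=
    pow_le_pow_left₀ hcF hinner n
  have hFpow : (F ^ ((1 : ℝ) / n)) ^ n = F := by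
    rw [← Real.rpow_natCast (F ^ ((1:ℝ)/n)) n, ← Real.rpow_mul hF, one_div,
      inv_mul_cancel₀ hn0', Real.rpow_one]
  have hcn : (1 + ε ^ 2 / (n : ℝ)) * F ≤ ((1 + ε ^ 2 / (n : ℝ)) * F ^ ((1 : ℝ) / n)) ^ n := by
    rw [mul_pow, hFpow]
    have h4 : (1 + ε ^ 2 / (n : ℝ)) ≤ (1 + ε ^ 2 / (n : ℝ)) ^ n :=
      le_self_pow₀ hc1 (by omega)
    exact mul_le_mul_of_nonneg_right h4 hF
  exact le_trans hcn hpow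
end

section
/- Let n ≥ 1 be a natural number and let δ ∈ [0,1] be real. Then for all real numbers h ≥ 0 and f ≥ 0 with f ≥ 2^{-δ}·h, one has ((1-δ)·f^{1/n} + δ·(2h)^{1/n})^n ≥ (1 + δ²·(log 2)/n)·h. In particular ((1-δ)·2^{-δ/n} + 2^{1/n}·δ)^n ≥ 1 + δ²·(log 2)/n. -/
/-- For `n ≥ 1`, `δ ∈ [0,1]`, and reals `h, f ≥ 0` with `f ≥ 2^{-δ}·h`,
one has `((1-δ)·f^{1/n} + δ·(2h)^{1/n})^n ≥ (1 + δ²·log 2/n)·h`; in particular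
`((1-δ)·2^{-δ/n} + 2^{1/n}·δ)^n ≥ 1 + δ²·log 2/n`. -/
theorem stmt_1 (n : ℕ) (hn : 1 ≤ n) (δ : ℝ) (hδ0 : 0 ≤ δ) (hδ1 : δ ≤ 1)
    (h f : ℝ) (hh : 0 ≤ h) (hf : 0 ≤ f) (hfh : (2 : ℝ) ^ (-δ) * h ≤ f) :
    (1 + δ ^ 2 * Real.log 2 / (n : ℝ)) * h ≤
      ((1 - δ) * f ^ ((1 : ℝ) / n) + δ * ((2 * h) ^ ((1 : ℝ) / n))) ^ n ∧
    1 + δ ^ 2 * Real.log 2 / (n : ℝ) ≤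
      ((1 - δ) * (2 : ℝ) ^ (-δ / (n : ℝ)) + (2 : ℝ) ^ ((1 : ℝ) / n) * δ) ^ n := by
  have h2 : (0:ℝ) ≤ 2 := by norm_num
  have hn0 : (0 : ℝ) < n := by exact_mod_cast Nat.lt_of_lt_of_le Nat.zero_lt_one hn
  have hn0' : (n : ℝ) ≠ 0 := ne_of_gt hn0
  set c : ℝ := (1 - δ) * (2 : ℝ) ^ (-δ / (n : ℝ)) + (2 : ℝ) ^ ((1 : ℝ) / n) * δ with hc
  -- weighted AM-GM
  have hgm : (2 : ℝ) ^ (δ ^ 2 / n) ≤ c := by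
    have key := Real.geom_mean_le_arith_mean2_weighted (by linarith : (0:ℝ) ≤ 1 - δ) hδ0
      (Real.rpow_pos_of_pos two_pos (-δ / (n : ℝ))).le
      (Real.rpow_pos_of_pos two_pos ((1 : ℝ) / n)).le (by ring)
    calc (2 : ℝ) ^ (δ ^ 2 / n)
        = ((2:ℝ) ^ (-δ / (n:ℝ))) ^ (1 - δ) * ((2:ℝ) ^ ((1:ℝ)/n)) ^ δ := by
          rw [← Real.rpow_mul h2, ← Real.rpow_mul h2, ← Real.rpow_add two_pos]
          congr 1; field_simp; ring
      _ ≤ c := by rw [hc]; linarith [key]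
  have hcpos : 0 < c := lt_of_lt_of_le (Real.rpow_pos_of_pos two_pos _) hgm
  -- c^n ≥ 2^{δ²}
  have hpow : (2 : ℝ) ^ (δ ^ 2) ≤ c ^ n := by
    calc (2 : ℝ) ^ (δ ^ 2) = ((2:ℝ) ^ (δ ^ 2 / n)) ^ n := by
          rw [← Real.rpow_natCast ((2:ℝ) ^ (δ ^ 2 / n)) n, ← Real.rpow_mul h2]
          congr 1; field_simp
      _ ≤ c ^ n := pow_le_pow_left₀ (Real.rpow_pos_of_pos two_pos _).le hgm n
  -- scalar estimate
  have hscalar : 1 + δ ^ 2 * Real.log 2 / (n : ℝ) ≤ c ^ n := by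
    have he : (2 : ℝ) ^ (δ ^ 2) = Real.exp (Real.log 2 * δ ^ 2) :=
      Real.rpow_def_of_pos two_pos _
    have hexp : 1 + Real.log 2 * δ ^ 2 ≤ Real.exp (Real.log 2 * δ ^ 2) := by
      linarith [Real.add_one_le_exp (Real.log 2 * δ ^ 2)]
    have hdiv : δ ^ 2 * Real.log 2 / (n : ℝ) ≤ δ ^ 2 * Real.log 2 := by
      apply div_le_self (by positivity) (by exact_mod_cast hn)
    nlinarith [he ▸ hpow]
  refine ⟨?_, hscalar⟩
  -- first part
  have hroot : c * h ^ ((1:ℝ)/n) ≤ (1 - δ) * f ^ ((1 : ℝ) / n) + δ * ((2 * h) ^ ((1 : ℝ) / n)) := by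
    have h1 : (2:ℝ) ^ (-δ / (n:ℝ)) * h ^ ((1:ℝ)/n) ≤ f ^ ((1:ℝ)/n) := by
      calc (2:ℝ) ^ (-δ / (n:ℝ)) * h ^ ((1:ℝ)/n)
          = ((2:ℝ) ^ (-δ) * h) ^ ((1:ℝ)/n) := by
            rw [Real.mul_rpow (by positivity) hh, ← Real.rpow_mul h2]
            congr 2; field_simp
        _ ≤ f ^ ((1:ℝ)/n) := Real.rpow_le_rpow (by positivity) hfh (by positivity)
    have h2' : (2 * h) ^ ((1:ℝ)/n) = (2:ℝ) ^ ((1:ℝ)/n) * h ^ ((1:ℝ)/n) :=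
      Real.mul_rpow h2 hh
    have hδ' : (0:ℝ) ≤ 1 - δ := by linarith
    nlinarith [mul_le_mul_of_nonneg_left h1 hδ', Real.rpow_nonneg hh ((1:ℝ)/n)]
  have hrootn : (c * h ^ ((1:ℝ)/n)) ^ n
      ≤ ((1 - δ) * f ^ ((1 : ℝ) / n) + δ * ((2 * h) ^ ((1 : ℝ) / n))) ^ n :=
    pow_le_pow_left₀ (by positivity) hroot n
  have hmulpow : (c * h ^ ((1:ℝ)/n)) ^ n = c ^ n * h := by
    rw [mul_pow, ← Real.rpow_natCast (h ^ ((1:ℝ)/n)) n, ← Real.rpow_mul hh]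
    field_simp
    simp
  calc (1 + δ ^ 2 * Real.log 2 / (n : ℝ)) * h ≤ c ^ n * h :=
        mul_le_mul_of_nonneg_right hscalar hh
    _ = (c * h ^ ((1:ℝ)/n)) ^ n := hmulpow.symm
    _ ≤ _ := hrootn
end

section
/- Let δ ∈ (0,1], K ≥ 0, c > 0 and M > 0 be real numbers with 4·K·δ ≤ M, and set s := exp(−5M/c). Let φ : ℝ → ℝ be a function such that t ↦ φ(t) + K·t² is nondecreasing on [0, δ], and assume φ(s·δ) ≥ φ(0) + 5M. Then for every t with 0 < t ≤ δ one has φ(t) + K·(t² − δ²) + K·(t − δ) − c·log(t/δ) ≥ φ(0) + 4M. -/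
/-- elementary estimate for the Kiselman–Legendre transform. -/
theorem stmt_3 (δ K c M : ℝ) (hδ0 : 0 < δ) (hδ1 : δ ≤ 1) (hK : 0 ≤ K) (hc : 0 < c)
    (hM : 0 < M) (hKδ : 4 * K * δ ≤ M) (s : ℝ) (hs : s = Real.exp (-(5 * M) / c))
    (φ : ℝ → ℝ) (hφ : MonotoneOn (fun t => φ t + K * t ^ 2) (Set.Icc 0 δ))
    (hφs : φ 0 + 5 * M ≤ φ (s * δ)) :
    ∀ t : ℝ, 0 < t → t ≤ δ →
      φ 0 + 4 * M ≤ φ t + K * (t ^ 2 - δ ^ 2) + K * (t - δ) - c * Real.log (t / δ) := by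
  intro t ht0 htδ
  have hs0 : 0 < s := hs ▸ Real.exp_pos _
  have hs1 : s ≤ 1 := by
    rw [hs]
    apply Real.exp_le_one_iff.mpr
    apply div_nonpos_of_nonpos_of_nonneg <;> linarith
  have hsδ0 : 0 ≤ s * δ := by positivity
  have hsδδ : s * δ ≤ δ := by nlinarith
  have hKδ2 : K * δ ^ 2 ≤ K * δ := by nlinarith [mul_nonneg hK hδ0.le]
  have hKt : K * (t - δ) ≥ -(K * δ) := by nlinarith
  by_cases hcase : s * δ ≤ t
  · -- t ≥ sδ
    have hmono := hφ ⟨hsδ0, hsδδ⟩ ⟨le_of_lt ht0, htδ⟩ hcase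
    simp only at hmono
    have hlog : Real.log (t / δ) ≤ 0 := by
      apply Real.log_nonpos
      · positivity
      · exact div_le_one_of_le₀ htδ (le_of_lt hδ0)
    have hclog : 0 ≤ -(c * Real.log (t / δ)) := by nlinarith
    have h1 : φ 0 + 5 * M ≤ φ t + K * t ^ 2 := by nlinarith [mul_nonneg hK (mul_nonneg hsδ0 hsδ0)]
    nlinarith
  · push_neg at hcase
    have hmono := hφ ⟨le_rfl, le_of_lt hδ0⟩ ⟨le_of_lt ht0, htδ⟩ (le_of_lt ht0)
    simp only at hmono
    have h1 : φ 0 ≤ φ t + K * t ^ 2 := by nlinarith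
    have hlog : Real.log (t / δ) < Real.log s := by
      apply Real.log_lt_log (by positivity)
      rw [div_lt_iff₀ hδ0]
      linarith [hcase]
    have hlogs : Real.log s = -(5 * M) / c := by rw [hs, Real.log_exp]
    have hclog : 5 * M < -(c * Real.log (t / δ)) := by
      have : c * Real.log (t / δ) < c * Real.log s := by
        exact mul_lt_mul_of_pos_left hlog hc
      rw [hlogs] at this
      have h2 : c * (-(5 * M) / c) = -(5 * M) := by field_simp
      linarith
    nlinarith
end
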